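/- (Single-letter two-pair converse bound.) Let Q, X₁, X₂, X₃ be finite-valued random variables with X₁, X₂, X₃ mutually conditionally independent given Q. Let X₁₁ = g₁₁(X₁), X₂₁ = g₂₁(X₂), X₃₁ = g₃₁(X₃), X₁₂ = g₁₂(X₁), X₂₂ = g₂₂(X₂), X₃₂ = g₃₂(X₃) for arbitrary functions g_{lk}; let S₁ = h₁(X₂₁,X₃₁) and S₂ = h₂(X₁₂,X₃₂) with h₁, h₂ one-to-one in each argument; and let Y₁ = f₁(X₁₁,S₁), Y₂ = f₂(X₂₂,S₂) with f₁, f₂ one-to-one in each argument. Assume the invertibility conditions H(S₁|Q) = H(X₂₁|Q) + H(X₃₁|Q) and H(S₂|Q) = H(X₁₂|Q) + H(X₃₂|Q), and the strong-interference condition H(X₂₂|Q) ≤ H(X₂₁|Q). Then I(X₁;Y₁|Q) + I(X₂;Y₂|Q) ≤ H(Y₁|X₃₁,Q). -/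

import Mathlib

open scoped Classical
open Finset

/-- A probability mass function on a finite sample space, given as a real-valued
weight function that is nonnegative and sums to one. -/
structure FinPMF (Ω : Type) where
  [fin : Fintype Ω]
  p : Ω → ℝ
  nonneg : ∀ ω, 0 ≤ p ω
  sum_one : ∑ ω, p ω = 1

/-- Probability of an event. -/
noncomputable def prE {Ω : Type} (μ : FinPMF Ω) (E : Ω → Prop) : ℝ :=
  letI := μ.fin
  ∑ ω, if E ω then μ.p ω else 0

/-- Probability that the random variable `X` takes the value `x`. -/
noncomputable def prX {Ω α : Type} (μ : FinPMF Ω) (X : Ω → α) (x : α) : ℝ :=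
  prE μ (fun ω => X ω = x)

/-- Shannon entropy (base 2) of a random variable on a finite probability space. -/
noncomputable def entH {Ω α : Type} (μ : FinPMF Ω) (X : Ω → α) : ℝ :=
  letI := μ.fin;
  -∑ x ∈ Finset.univ.image X, prX μ X x * Real.logb 2 (prX μ X x)

/-- Conditional entropy `H(X | Y)` (base 2). -/
noncomputable def condH {Ω α β : Type} (μ : FinPMF Ω) (X : Ω → α) (Y : Ω → β) : ℝ :=
  entH μ (fun ω => (X ω, Y ω)) - entH μ Y

/-- Conditional mutual information `I(X ; Y | Q)` (base 2). -/
noncomputable def condMI {Ω α β γ : Type} (μ : FinPMF Ω) (X : Ω → α) (Y : Ω → β)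
    (Q : Ω → γ) : ℝ :=
  condH μ X Q + condH μ Y Q - condH μ (fun ω => (X ω, Y ω)) Q

/-- A two-argument function is one-to-one in each argument. -/
def OneToOne {A B C : Type} (f : A → B → C) : Prop :=
  (∀ b, Function.Injective fun a => f a b) ∧ ∀ a, Function.Injective (f a)

/-- Conditional pmf `p_{X|U}(x|u)`. -/
noncomputable def condP {Ω α γ : Type} (μ : FinPMF Ω) (X : Ω → α) (U : Ω → γ)
    (x : α) (u : γ) : ℝ :=
  prE μ (fun ω => X ω = x ∧ U ω = u) / prX μ U u

/-- Independence of two random variables. -/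
def IndepFun {Ω α β : Type} (μ : FinPMF Ω) (X : Ω → α) (S : Ω → β) : Prop :=
  ∀ x s, prE μ (fun ω => X ω = x ∧ S ω = s) = prX μ X x * prX μ S s

/-- Conditional independence of `A` and `B` given `Z`:
for every `z` with `P(Z = z) > 0`, `P(A = a, B = b | Z = z) = P(A = a | Z = z) P(B = b | Z = z)`. -/
def CondIndepFun {Ω α β γ : Type} (μ : FinPMF Ω) (A : Ω → α) (B : Ω → β) (Z : Ω → γ) : Prop :=
  ∀ a b z, 0 < prX μ Z z →
    prE μ (fun ω => A ω = a ∧ B ω = b ∧ Z ω = z) / prX μ Z z =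
      (prE μ (fun ω => A ω = a ∧ Z ω = z) / prX μ Z z) *
        (prE μ (fun ω => B ω = b ∧ Z ω = z) / prX μ Z z)

/-- Mutual conditional independence of `X₁, X₂, X₃` given `Q`: the joint conditional pmf
factors into the product of the conditional marginals. -/
def CondIndepFun3 {Ω α₁ α₂ α₃ γ : Type} (μ : FinPMF Ω)
    (X₁ : Ω → α₁) (X₂ : Ω → α₂) (X₃ : Ω → α₃) (Q : Ω → γ) : Prop :=
  ∀ x₁ x₂ x₃ q, 0 < prX μ Q q →
    prE μ (fun ω => X₁ ω = x₁ ∧ X₂ ω = x₂ ∧ X₃ ω = x₃ ∧ Q ω = q) / prX μ Q q =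
      (prE μ (fun ω => X₁ ω = x₁ ∧ Q ω = q) / prX μ Q q) *
        (prE μ (fun ω => X₂ ω = x₂ ∧ Q ω = q) / prX μ Q q) *
        (prE μ (fun ω => X₃ ω = x₃ ∧ Q ω = q) / prX μ Q q)

/-- The ε-typical set (sequences whose empirical pmf is within a relative ε of `p`). -/
def Typical {𝒳 : Type} [Fintype 𝒳] (p : 𝒳 → ℝ) (ε : ℝ) (n : ℕ) (xs : Fin n → 𝒳) : Prop :=
  ∀ x : 𝒳, |((Finset.univ.filter fun i => xs i = x).card : ℝ) / n - p x| ≤ ε * p x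

/-- The number of codewords `⌈2^{nR}⌉` at rate `R` and blocklength `n`. -/
noncomputable def codeSize (R : ℝ) (n : ℕ) : ℕ := ⌈(2 : ℝ) ^ ((n : ℝ) * R)⌉₊

section Lemmas
variable {Ω : Type} (μ : FinPMF Ω)

lemma prE_nonneg (E : Ω → Prop) : 0 ≤ prE μ E := by
  letI := μ.fin
  unfold prE
  exact Finset.sum_nonneg fun ω _ => by split <;> simp [μ.nonneg]

lemma prE_congr {E F : Ω → Prop} (h : ∀ ω, E ω ↔ F ω) : prE μ E = prE μ F := by
  letI := μ.fin
  unfold prE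
  exact Finset.sum_congr rfl fun ω _ => by simp [h ω]

lemma prE_mono {E F : Ω → Prop} (h : ∀ ω, E ω → F ω) : prE μ E ≤ prE μ F := by
  letI := μ.fin
  unfold prE
  refine Finset.sum_le_sum fun ω _ => ?_
  by_cases hE : E ω
  · simp [hE, h ω hE]
  · simp only [hE, if_false]; split <;> simp [μ.nonneg]

lemma prX_nonneg {α : Type} (X : Ω → α) (x : α) : 0 ≤ prX μ X x := prE_nonneg μ _

lemma prE_comp {α : Type} [Fintype α] (X : Ω → α) (p : α → Prop) :
    prE μ (fun ω => p (X ω)) = ∑ x : α, if p x then prX μ X x else 0 := by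
  letI := μ.fin
  unfold prX prE
  have key : ∀ ω : Ω, (if p (X ω) then μ.p ω else 0)
      = ∑ x : α, if X ω = x ∧ p x then μ.p ω else 0 := by
    intro ω
    rw [Finset.sum_eq_single (X ω)]
    · simp
    · intro b _ hb
      have : X ω ≠ b := Ne.symm hb
      simp [this]
    · simp
  rw [Finset.sum_congr rfl fun ω _ => key ω, Finset.sum_comm]
  refine Finset.sum_congr rfl fun x _ => ?_
  by_cases hp : p x <;> simp [hp]

lemma prE_sum_eq {β : Type} [Fintype β] (S : Ω → β) (E : Ω → Prop) :
    ∑ s : β, prE μ (fun ω => E ω ∧ S ω = s) = prE μ E := by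
  letI := μ.fin
  unfold prE
  rw [Finset.sum_comm]
  refine Finset.sum_congr rfl fun ω _ => ?_
  rw [Finset.sum_eq_single (S ω)]
  · simp
  · intro b _ hb
    have : S ω ≠ b := Ne.symm hb
    simp [this]
  · simp

end Lemmas
section Lemmas2
variable {Ω : Type} (μ : FinPMF Ω)

lemma prX_eq_zero_of_not_mem {α : Type} (X : Ω → α) {x : α}
    (hx : letI := μ.fin; x ∉ Finset.univ.image X) : prX μ X x = 0 := by
  letI := μ.fin
  unfold prX prE
  refine Finset.sum_eq_zero fun ω _ => ?_
  have : X ω ≠ x := fun h => hx (Finset.mem_image.2 ⟨ω, Finset.mem_univ ω, h⟩)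
  simp [this]

lemma entH_eq_sum {α : Type} [Fintype α] (X : Ω → α) :
    entH μ X = -∑ x : α, prX μ X x * Real.logb 2 (prX μ X x) := by
  letI := μ.fin
  unfold entH
  congr 1
  exact Finset.sum_subset (Finset.subset_univ _)
    (fun x _ hx => by rw [prX_eq_zero_of_not_mem μ X hx]; simp)

lemma prX_comp_injective {α β : Type} (X : Ω → α) {e : α → β} (he : Function.Injective e)
    (x : α) : prX μ (fun ω => e (X ω)) (e x) = prX μ X x :=
  prE_congr μ fun ω => ⟨fun h => he h, fun h => congrArg e h⟩

lemma entH_comp_injective {α β : Type} (X : Ω → α) {e : α → β} (he : Function.Injective e) :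
    entH μ (fun ω => e (X ω)) = entH μ X := by
  letI := μ.fin
  unfold entH
  congr 1
  have himg : (Finset.univ.image fun ω => e (X ω)) = (Finset.univ.image X).image e := by
    rw [Finset.image_image]; rfl
  rw [himg, Finset.sum_image (fun a _ b _ h => he h)]
  exact Finset.sum_congr rfl fun x _ => by rw [prX_comp_injective μ X he]

lemma entH_comp_le {α β : Type} [Fintype α] [Fintype β] (X : Ω → α) (f : α → β) :
    entH μ (fun ω => f (X ω)) ≤ entH μ X := by
  letI := μ.fin
  rw [entH_eq_sum, entH_eq_sum, neg_le_neg_iff]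
  set p : α → ℝ := fun x => prX μ X x with hp
  set q : β → ℝ := fun y => prX μ (fun ω => f (X ω)) y with hq
  have hqsum : ∀ y, q y = ∑ x ∈ Finset.univ.filter (fun x => f x = y), p x := by
    intro y
    show prE μ (fun ω => f (X ω) = y) = _
    rw [prE_comp μ X (fun x => f x = y), Finset.sum_filter]
  have hple : ∀ x, p x ≤ q (f x) := by
    intro x
    rw [hqsum]
    exact Finset.single_le_sum (fun i _ => prX_nonneg μ X i)
      (Finset.mem_filter.2 ⟨Finset.mem_univ x, rfl⟩)
  have step1 : ∑ x : α, p x * Real.logb 2 (p x) ≤ ∑ x : α, p x * Real.logb 2 (q (f x)) := by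
    refine Finset.sum_le_sum fun x _ => ?_
    rcases eq_or_lt_of_le (show (0:ℝ) ≤ p x from prX_nonneg μ X x) with h0 | h0
    · rw [← h0]; simp
    · exact mul_le_mul_of_nonneg_left
        (Real.logb_le_logb_of_le one_lt_two h0 (hple x)) (le_of_lt h0)
  have step2 : ∑ y : β, q y * Real.logb 2 (q y) = ∑ x : α, p x * Real.logb 2 (q (f x)) := by
    rw [← Finset.sum_fiberwise Finset.univ f (fun x => p x * Real.logb 2 (q (f x)))]
    refine Finset.sum_congr rfl fun y _ => ?_
    have hcg : ∀ x ∈ Finset.univ.filter fun x => f x = y,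
        p x * Real.logb 2 (q (f x)) = p x * Real.logb 2 (q y) := fun x hx => by
      rw [(Finset.mem_filter.1 hx).2]
    rw [Finset.sum_congr rfl hcg, ← Finset.sum_mul, ← hqsum y]
  rw [step2]; exact step1

end Lemmas2
section Lemmas3
variable {Ω : Type} (μ : FinPMF Ω)

/-- Product-form conditional independence (no division). -/
def CI2 {α β γ : Type} (X : Ω → α) (S : Ω → β) (Q : Ω → γ) : Prop :=
  ∀ x s q, prE μ (fun ω => X ω = x ∧ S ω = s ∧ Q ω = q) * prX μ Q q =
    prE μ (fun ω => X ω = x ∧ Q ω = q) * prE μ (fun ω => S ω = s ∧ Q ω = q)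

lemma prE_comp_and {α γ : Type} [Fintype α] [Fintype γ] (X : Ω → α) (Q : Ω → γ)
    (p : α → Prop) (q : γ) :
    prE μ (fun ω => p (X ω) ∧ Q ω = q) =
      ∑ x : α, if p x then prE μ (fun ω => X ω = x ∧ Q ω = q) else 0 := by
  classical
  have h0 : prE μ (fun ω => p (X ω) ∧ Q ω = q)
      = prE μ (fun ω => (fun z : α × γ => p z.1 ∧ z.2 = q) ((fun ω => (X ω, Q ω)) ω)) :=
    prE_congr μ fun ω => Iff.rfl
  rw [h0, prE_comp μ (fun ω => (X ω, Q ω)) (fun z : α × γ => p z.1 ∧ z.2 = q),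
    Fintype.sum_prod_type]
  refine Finset.sum_congr rfl fun x _ => ?_
  have hx : ∀ q' : γ, prX μ (fun ω => (X ω, Q ω)) (x, q')
      = prE μ (fun ω => X ω = x ∧ Q ω = q') := fun q' =>
    prE_congr μ fun ω => by simp [Prod.ext_iff]
  by_cases hp : p x
  · simp only [hp, true_and]
    rw [Finset.sum_eq_single q]
    · simp [hx q]
    · intro b _ hb; simp [hb]
    · simp
  · simp [hp]

lemma entH_CI {α β γ : Type} [Fintype α] [Fintype β] [Fintype γ]
    (X : Ω → α) (S : Ω → β) (Q : Ω → γ) (h : CI2 μ X S Q) :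
    entH μ (fun ω => (X ω, S ω, Q ω)) =
      entH μ (fun ω => (X ω, Q ω)) + entH μ (fun ω => (S ω, Q ω)) - entH μ Q := by
  classical
  set L : ℝ → ℝ := Real.logb 2 with hL
  set a : α → β → γ → ℝ := fun x s q => prE μ (fun ω => X ω = x ∧ S ω = s ∧ Q ω = q) with ha
  set b : α → γ → ℝ := fun x q => prE μ (fun ω => X ω = x ∧ Q ω = q) with hb
  set c : β → γ → ℝ := fun s q => prE μ (fun ω => S ω = s ∧ Q ω = q) with hc
  set d : γ → ℝ := fun q => prX μ Q q with hd
  -- marginalization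
  have hmb : ∀ x q, ∑ s : β, a x s q = b x q := by
    intro x q
    rw [Finset.sum_congr rfl fun s _ =>
      prE_congr μ (E := fun ω => X ω = x ∧ S ω = s ∧ Q ω = q)
        (F := fun ω => (X ω = x ∧ Q ω = q) ∧ S ω = s) (fun ω => by tauto)]
    exact prE_sum_eq μ S _
  have hmc : ∀ s q, ∑ x : α, a x s q = c s q := by
    intro s q
    rw [Finset.sum_congr rfl fun x _ =>
      prE_congr μ (E := fun ω => X ω = x ∧ S ω = s ∧ Q ω = q)
        (F := fun ω => (S ω = s ∧ Q ω = q) ∧ X ω = x) (fun ω => by tauto)]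
    exact prE_sum_eq μ X _
  have hmd : ∀ q, ∑ x : α, b x q = d q := by
    intro q
    rw [Finset.sum_congr rfl fun x _ =>
      prE_congr μ (E := fun ω => X ω = x ∧ Q ω = q)
        (F := fun ω => Q ω = q ∧ X ω = x) (fun ω => by tauto)]
    exact prE_sum_eq μ X _
  have hmcd : ∀ q, ∑ s : β, c s q = d q := by
    intro q
    rw [Finset.sum_congr rfl fun s _ =>
      prE_congr μ (E := fun ω => S ω = s ∧ Q ω = q)
        (F := fun ω => Q ω = q ∧ S ω = s) (fun ω => by tauto)]
    exact prE_sum_eq μ S _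
  -- pointwise splitting of the log
  have hpoint : ∀ x s q, a x s q * L (a x s q)
      = a x s q * L (b x q) + a x s q * L (c s q) - a x s q * L (d q) := by
    intro x s q
    rcases eq_or_lt_of_le (prE_nonneg μ (fun ω => X ω = x ∧ S ω = s ∧ Q ω = q))
      with h0 | h0
    · rw [show a x s q = 0 from h0.symm]; ring
    · have hab : a x s q ≤ b x q := prE_mono μ (fun ω hw => ⟨hw.1, hw.2.2⟩)
      have hac : a x s q ≤ c s q := prE_mono μ (fun ω hw => ⟨hw.2.1, hw.2.2⟩)
      have had : a x s q ≤ d q := prE_mono μ (fun ω hw => hw.2.2)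
      have hbpos : 0 < b x q := lt_of_lt_of_le h0 hab
      have hcpos : 0 < c s q := lt_of_lt_of_le h0 hac
      have hdpos : 0 < d q := lt_of_lt_of_le h0 had
      have heq : a x s q = b x q * c s q / d q := by
        have := h x s q
        field_simp
        linarith [this]
      rw [heq, hL]
      rw [Real.logb_div (by positivity) (ne_of_gt hdpos),
        Real.logb_mul (ne_of_gt hbpos) (ne_of_gt hcpos)]
      ring
  -- express entropies as triple sums
  have hprX3 : ∀ p : α × β × γ, prX μ (fun ω => (X ω, S ω, Q ω)) p = a p.1 p.2.1 p.2.2 := by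
    rintro ⟨x, s, q⟩
    exact prE_congr μ (fun ω => by simp [Prod.ext_iff])
  have hprXQ : ∀ p : α × γ, prX μ (fun ω => (X ω, Q ω)) p = b p.1 p.2 := by
    rintro ⟨x, q⟩
    exact prE_congr μ (fun ω => by simp [Prod.ext_iff])
  have hprSQ : ∀ p : β × γ, prX μ (fun ω => (S ω, Q ω)) p = c p.1 p.2 := by
    rintro ⟨s, q⟩
    exact prE_congr μ (fun ω => by simp [Prod.ext_iff])
  have e3 : entH μ (fun ω => (X ω, S ω, Q ω))
      = -∑ x : α, ∑ s : β, ∑ q : γ, a x s q * L (a x s q) := by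
    rw [entH_eq_sum, Fintype.sum_prod_type]
    congr 1
    refine Finset.sum_congr rfl fun x _ => ?_
    rw [Fintype.sum_prod_type]
    exact Finset.sum_congr rfl fun s _ => Finset.sum_congr rfl fun q _ => by
      rw [hprX3 (x, s, q)]
  have eXQ : entH μ (fun ω => (X ω, Q ω)) = -∑ x : α, ∑ q : γ, b x q * L (b x q) := by
    rw [entH_eq_sum, Fintype.sum_prod_type]
    congr 1
    exact Finset.sum_congr rfl fun x _ => Finset.sum_congr rfl fun q _ => by
      rw [hprXQ (x, q)]
  have eSQ : entH μ (fun ω => (S ω, Q ω)) = -∑ s : β, ∑ q : γ, c s q * L (c s q) := by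
    rw [entH_eq_sum, Fintype.sum_prod_type]
    congr 1
    exact Finset.sum_congr rfl fun s _ => Finset.sum_congr rfl fun q _ => by
      rw [hprSQ (s, q)]
  have eQ : entH μ Q = -∑ q : γ, d q * L (d q) := entH_eq_sum μ Q
  -- collapse the three cross sums
  have S1 : ∑ x : α, ∑ s : β, ∑ q : γ, a x s q * L (b x q)
      = ∑ x : α, ∑ q : γ, b x q * L (b x q) := by
    refine Finset.sum_congr rfl fun x _ => ?_
    rw [Finset.sum_comm]
    refine Finset.sum_congr rfl fun q _ => ?_
    rw [← Finset.sum_mul, hmb]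
  have S2 : ∑ x : α, ∑ s : β, ∑ q : γ, a x s q * L (c s q)
      = ∑ s : β, ∑ q : γ, c s q * L (c s q) := by
    rw [Finset.sum_comm]
    refine Finset.sum_congr rfl fun s _ => ?_
    rw [Finset.sum_comm]
    refine Finset.sum_congr rfl fun q _ => ?_
    rw [← Finset.sum_mul, hmc]
  have S3 : ∑ x : α, ∑ s : β, ∑ q : γ, a x s q * L (d q)
      = ∑ q : γ, d q * L (d q) := by
    have step : ∀ x, ∑ s : β, ∑ q : γ, a x s q * L (d q)
        = ∑ q : γ, b x q * L (d q) := by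
      intro x
      rw [Finset.sum_comm]
      refine Finset.sum_congr rfl fun q _ => ?_
      rw [← Finset.sum_mul, hmb]
    rw [Finset.sum_congr rfl fun x _ => step x, Finset.sum_comm]
    refine Finset.sum_congr rfl fun q _ => ?_
    rw [← Finset.sum_mul, hmd]
  rw [e3, eXQ, eSQ, eQ,
    Finset.sum_congr rfl fun x (_ : x ∈ Finset.univ) =>
      Finset.sum_congr rfl fun s (_ : s ∈ Finset.univ) =>
        Finset.sum_congr rfl fun q (_ : q ∈ Finset.univ) => hpoint x s q]
  simp only [Finset.sum_sub_distrib, Finset.sum_add_distrib]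
  rw [S1, S2, S3]
  ring

end Lemmas3
section Lemmas4
variable {Ω : Type} (μ : FinPMF Ω)

lemma CI2_comp {α β γ α' β' : Type} [Fintype α] [Fintype β] [Fintype γ]
    {X : Ω → α} {S : Ω → β} {Q : Ω → γ} (h : CI2 μ X S Q) (φ : α → α') (ψ : β → β') :
    CI2 μ (fun ω => φ (X ω)) (fun ω => ψ (S ω)) Q := by
  classical
  intro a b q
  set d : ℝ := prX μ Q q with hd
  have hL : prE μ (fun ω => φ (X ω) = a ∧ ψ (S ω) = b ∧ Q ω = q)
      = ∑ x : α, ∑ s : β, if φ x = a ∧ ψ s = b then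
          prE μ (fun ω => X ω = x ∧ S ω = s ∧ Q ω = q) else 0 := by
    have h0 : prE μ (fun ω => φ (X ω) = a ∧ ψ (S ω) = b ∧ Q ω = q)
        = prE μ (fun ω => (fun z : α × β => φ z.1 = a ∧ ψ z.2 = b)
            ((fun ω => (X ω, S ω)) ω) ∧ Q ω = q) := prE_congr μ fun ω => by tauto
    rw [h0, prE_comp_and μ (fun ω => (X ω, S ω)) Q
        (fun z : α × β => φ z.1 = a ∧ ψ z.2 = b) q, Fintype.sum_prod_type]
    refine Finset.sum_congr rfl fun x _ => Finset.sum_congr rfl fun s _ => ?_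
    by_cases hc : φ x = a ∧ ψ s = b
    · simp only [hc, if_true]
      exact prE_congr μ fun ω => by simp [Prod.ext_iff]; tauto
    · simp [hc]
  have hXa : prE μ (fun ω => φ (X ω) = a ∧ Q ω = q)
      = ∑ x : α, if φ x = a then prE μ (fun ω => X ω = x ∧ Q ω = q) else 0 :=
    prE_comp_and μ X Q (fun x => φ x = a) q
  have hSb : prE μ (fun ω => ψ (S ω) = b ∧ Q ω = q)
      = ∑ s : β, if ψ s = b then prE μ (fun ω => S ω = s ∧ Q ω = q) else 0 :=
    prE_comp_and μ S Q (fun s => ψ s = b) q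
  rw [hL, hXa, hSb, Finset.sum_mul_sum, Finset.sum_mul]
  refine Finset.sum_congr rfl fun x _ => ?_
  rw [Finset.sum_mul]
  refine Finset.sum_congr rfl fun s _ => ?_
  by_cases hc1 : φ x = a <;> by_cases hc2 : ψ s = b <;>
    simp [hc1, hc2, h x s q, hd]

lemma ci3_pair₁ {α₁ α₂ α₃ γ : Type} [Fintype α₁] [Fintype α₂] [Fintype α₃] [Fintype γ]
    {X₁ : Ω → α₁} {X₂ : Ω → α₂} {X₃ : Ω → α₃} {Q : Ω → γ}
    (h : CondIndepFun3 μ X₁ X₂ X₃ Q) :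
    CI2 μ X₁ (fun ω => (X₂ ω, X₃ ω)) Q := by
  rintro x₁ ⟨x₂, x₃⟩ q
  set d : ℝ := prX μ Q q with hd
  set A : α₁ → ℝ := fun y =>
    prE μ (fun ω => X₁ ω = y ∧ X₂ ω = x₂ ∧ X₃ ω = x₃ ∧ Q ω = q) with hA
  set b₁ : α₁ → ℝ := fun y => prE μ (fun ω => X₁ ω = y ∧ Q ω = q) with hb₁
  set b₂ : ℝ := prE μ (fun ω => X₂ ω = x₂ ∧ Q ω = q) with hb₂
  set b₃ : ℝ := prE μ (fun ω => X₃ ω = x₃ ∧ Q ω = q) with hb₃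
  set P : ℝ := prE μ (fun ω => X₂ ω = x₂ ∧ X₃ ω = x₃ ∧ Q ω = q) with hP
  have goal_lhs : prE μ (fun ω => X₁ ω = x₁ ∧ (X₂ ω, X₃ ω) = (x₂, x₃) ∧ Q ω = q)
      = A x₁ := prE_congr μ fun ω => by simp [Prod.ext_iff]; tauto
  have goal_rhs : prE μ (fun ω => (X₂ ω, X₃ ω) = (x₂, x₃) ∧ Q ω = q) = P :=
    prE_congr μ fun ω => by simp [Prod.ext_iff]; tauto
  rw [goal_lhs, goal_rhs]
  rcases eq_or_lt_of_le (prX_nonneg μ Q q) with hd0 | hd0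
  · have h1 : b₁ x₁ ≤ d := prE_mono μ fun ω hw => hw.2
    have h1' : 0 ≤ b₁ x₁ := prE_nonneg μ _
    have hz : prE μ (fun ω => X₁ ω = x₁ ∧ Q ω = q) = 0 :=
      le_antisymm (by rw [hd, ← hd0] at h1; exact h1) h1'
    rw [show d = 0 from hd.trans hd0.symm, hz]; ring
  · have key : ∀ y, A y * d ^ 2 = b₁ y * b₂ * b₃ := by
      intro y
      have := h y x₂ x₃ q hd0
      field_simp at this
      nlinarith [this]
    have hsumA : ∑ y : α₁, A y = P := by
      rw [Finset.sum_congr rfl fun y _ =>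
        prE_congr μ (E := fun ω => X₁ ω = y ∧ X₂ ω = x₂ ∧ X₃ ω = x₃ ∧ Q ω = q)
          (F := fun ω => (X₂ ω = x₂ ∧ X₃ ω = x₃ ∧ Q ω = q) ∧ X₁ ω = y) fun ω => by tauto]
      exact prE_sum_eq μ X₁ _
    have hsumb : ∑ y : α₁, b₁ y = d := by
      rw [Finset.sum_congr rfl fun y _ =>
        prE_congr μ (E := fun ω => X₁ ω = y ∧ Q ω = q)
          (F := fun ω => Q ω = q ∧ X₁ ω = y) fun ω => by tauto]
      exact prE_sum_eq μ X₁ _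
    have hPd : P * d = b₂ * b₃ := by
      have := Finset.sum_congr rfl fun y (_ : y ∈ Finset.univ) => key y
      rw [← Finset.sum_mul, hsumA, ← Finset.sum_mul, ← Finset.sum_mul, hsumb] at this
      have hd' : d ≠ 0 := ne_of_gt hd0
      have : P * d * d = b₂ * b₃ * d := by nlinarith [this]
      exact mul_right_cancel₀ hd' this
    have hfin : A x₁ * d * d = b₁ x₁ * P * d :=
      calc A x₁ * d * d = A x₁ * d ^ 2 := by ring
        _ = b₁ x₁ * b₂ * b₃ := key x₁
        _ = b₁ x₁ * (P * d) := by rw [hPd]; ring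
        _ = b₁ x₁ * P * d := by ring
    exact mul_right_cancel₀ (ne_of_gt hd0) hfin

lemma ci3_pair₂ {α₁ α₂ α₃ γ : Type} [Fintype α₁] [Fintype α₂] [Fintype α₃] [Fintype γ]
    {X₁ : Ω → α₁} {X₂ : Ω → α₂} {X₃ : Ω → α₃} {Q : Ω → γ}
    (h : CondIndepFun3 μ X₁ X₂ X₃ Q) :
    CI2 μ X₂ (fun ω => (X₁ ω, X₃ ω)) Q := by
  rintro x₂ ⟨x₁, x₃⟩ q
  set d : ℝ := prX μ Q q with hd
  set A : α₂ → ℝ := fun y =>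
    prE μ (fun ω => X₁ ω = x₁ ∧ X₂ ω = y ∧ X₃ ω = x₃ ∧ Q ω = q) with hA
  set b₂ : α₂ → ℝ := fun y => prE μ (fun ω => X₂ ω = y ∧ Q ω = q) with hb₂
  set b₁ : ℝ := prE μ (fun ω => X₁ ω = x₁ ∧ Q ω = q) with hb₁
  set b₃ : ℝ := prE μ (fun ω => X₃ ω = x₃ ∧ Q ω = q) with hb₃
  set P : ℝ := prE μ (fun ω => X₁ ω = x₁ ∧ X₃ ω = x₃ ∧ Q ω = q) with hP
  have goal_lhs : prE μ (fun ω => X₂ ω = x₂ ∧ (X₁ ω, X₃ ω) = (x₁, x₃) ∧ Q ω = q)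
      = A x₂ := prE_congr μ fun ω => by simp [Prod.ext_iff]; tauto
  have goal_rhs : prE μ (fun ω => (X₁ ω, X₃ ω) = (x₁, x₃) ∧ Q ω = q) = P :=
    prE_congr μ fun ω => by simp [Prod.ext_iff]; tauto
  rw [goal_lhs, goal_rhs]
  rcases eq_or_lt_of_le (prX_nonneg μ Q q) with hd0 | hd0
  · have h1 : b₂ x₂ ≤ d := prE_mono μ fun ω hw => hw.2
    have h1' : 0 ≤ b₂ x₂ := prE_nonneg μ _
    have hz : prE μ (fun ω => X₂ ω = x₂ ∧ Q ω = q) = 0 :=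
      le_antisymm (by rw [hd, ← hd0] at h1; exact h1) h1'
    rw [show d = 0 from hd.trans hd0.symm, hz]; ring
  · have key : ∀ y, A y * d ^ 2 = b₁ * b₂ y * b₃ := by
      intro y
      have := h x₁ y x₃ q hd0
      field_simp at this
      nlinarith [this]
    have hsumA : ∑ y : α₂, A y = P := by
      rw [Finset.sum_congr rfl fun y _ =>
        prE_congr μ (E := fun ω => X₁ ω = x₁ ∧ X₂ ω = y ∧ X₃ ω = x₃ ∧ Q ω = q)
          (F := fun ω => (X₁ ω = x₁ ∧ X₃ ω = x₃ ∧ Q ω = q) ∧ X₂ ω = y) fun ω => by tauto]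
      exact prE_sum_eq μ X₂ _
    have hsumb : ∑ y : α₂, b₂ y = d := by
      rw [Finset.sum_congr rfl fun y _ =>
        prE_congr μ (E := fun ω => X₂ ω = y ∧ Q ω = q)
          (F := fun ω => Q ω = q ∧ X₂ ω = y) fun ω => by tauto]
      exact prE_sum_eq μ X₂ _
    have hPd : P * d = b₁ * b₃ := by
      have hs := Finset.sum_congr rfl fun y (_ : y ∈ Finset.univ) => key y
      rw [← Finset.sum_mul, hsumA] at hs
      have hs2 : ∑ y : α₂, b₁ * b₂ y * b₃ = b₁ * d * b₃ := by
        rw [show (fun y => b₁ * b₂ y * b₃) = fun y => b₂ y * (b₁ * b₃) from by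
          funext y; ring] at *
        rw [← Finset.sum_mul]  -- may not apply; fallback below
        rw [hsumb]; ring
      rw [hs2] at hs
      have hd' : d ≠ 0 := ne_of_gt hd0
      have : P * d * d = b₁ * b₃ * d := by nlinarith [hs]
      exact mul_right_cancel₀ hd' this
    have hfin : A x₂ * d * d = b₂ x₂ * P * d :=
      calc A x₂ * d * d = A x₂ * d ^ 2 := by ring
        _ = b₁ * b₂ x₂ * b₃ := key x₂
        _ = b₂ x₂ * (P * d) := by rw [hPd]; ring
        _ = b₂ x₂ * P * d := by ring
    exact mul_right_cancel₀ (ne_of_gt hd0) hfin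

end Lemmas4
/-- Single-letter two-pair converse bound. -/
theorem two_pair_converse_bound
    {Ω 𝒬 𝒳₁ 𝒳₂ 𝒳₃ 𝒳₁₁ 𝒳₂₁ 𝒳₃₁ 𝒳₁₂ 𝒳₂₂ 𝒳₃₂ 𝒮₁ 𝒮₂ 𝒴₁ 𝒴₂ : Type}
    [Fintype 𝒬] [Nonempty 𝒬] [Fintype 𝒳₁] [Nonempty 𝒳₁] [Fintype 𝒳₂] [Nonempty 𝒳₂]
    [Fintype 𝒳₃] [Nonempty 𝒳₃] [Fintype 𝒳₁₁] [Nonempty 𝒳₁₁] [Fintype 𝒳₂₁] [Nonempty 𝒳₂₁]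
    [Fintype 𝒳₃₁] [Nonempty 𝒳₃₁] [Fintype 𝒳₁₂] [Nonempty 𝒳₁₂] [Fintype 𝒳₂₂] [Nonempty 𝒳₂₂]
    [Fintype 𝒳₃₂] [Nonempty 𝒳₃₂] [Fintype 𝒮₁] [Nonempty 𝒮₁] [Fintype 𝒮₂] [Nonempty 𝒮₂]
    [Fintype 𝒴₁] [Nonempty 𝒴₁] [Fintype 𝒴₂] [Nonempty 𝒴₂]
    (μ : FinPMF Ω) (Q : Ω → 𝒬) (X₁ : Ω → 𝒳₁) (X₂ : Ω → 𝒳₂) (X₃ : Ω → 𝒳₃)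
    (g₁₁ : 𝒳₁ → 𝒳₁₁) (g₂₁ : 𝒳₂ → 𝒳₂₁) (g₃₁ : 𝒳₃ → 𝒳₃₁)
    (g₁₂ : 𝒳₁ → 𝒳₁₂) (g₂₂ : 𝒳₂ → 𝒳₂₂) (g₃₂ : 𝒳₃ → 𝒳₃₂)
    (h₁ : 𝒳₂₁ → 𝒳₃₁ → 𝒮₁) (h₂ : 𝒳₁₂ → 𝒳₃₂ → 𝒮₂)
    (f₁ : 𝒳₁₁ → 𝒮₁ → 𝒴₁) (f₂ : 𝒳₂₂ → 𝒮₂ → 𝒴₂)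
    (hindep : CondIndepFun3 μ X₁ X₂ X₃ Q)
    (hh₁ : OneToOne h₁) (hh₂ : OneToOne h₂) (hf₁ : OneToOne f₁) (hf₂ : OneToOne f₂)
    (hinv₁ : condH μ (fun ω => h₁ (g₂₁ (X₂ ω)) (g₃₁ (X₃ ω))) Q =
      condH μ (fun ω => g₂₁ (X₂ ω)) Q + condH μ (fun ω => g₃₁ (X₃ ω)) Q)
    (hinv₂ : condH μ (fun ω => h₂ (g₁₂ (X₁ ω)) (g₃₂ (X₃ ω))) Q =
      condH μ (fun ω => g₁₂ (X₁ ω)) Q + condH μ (fun ω => g₃₂ (X₃ ω)) Q)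
    (hstrong : condH μ (fun ω => g₂₂ (X₂ ω)) Q ≤ condH μ (fun ω => g₂₁ (X₂ ω)) Q) :
    condMI μ X₁ (fun ω => f₁ (g₁₁ (X₁ ω)) (h₁ (g₂₁ (X₂ ω)) (g₃₁ (X₃ ω)))) Q +
      condMI μ X₂ (fun ω => f₂ (g₂₂ (X₂ ω)) (h₂ (g₁₂ (X₁ ω)) (g₃₂ (X₃ ω)))) Q ≤
    condH μ (fun ω => f₁ (g₁₁ (X₁ ω)) (h₁ (g₂₁ (X₂ ω)) (g₃₁ (X₃ ω))))
      (fun ω => (g₃₁ (X₃ ω), Q ω)) := by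
  classical
  -- conditional independences
  have ci1 : CI2 μ X₁ (fun ω => h₁ (g₂₁ (X₂ ω)) (g₃₁ (X₃ ω))) Q :=
    CI2_comp μ (ci3_pair₁ μ hindep) (id : 𝒳₁ → 𝒳₁)
      (fun p : 𝒳₂ × 𝒳₃ => h₁ (g₂₁ p.1) (g₃₁ p.2))
  have ci2 : CI2 μ X₂ (fun ω => h₂ (g₁₂ (X₁ ω)) (g₃₂ (X₃ ω))) Q :=
    CI2_comp μ (ci3_pair₂ μ hindep) (id : 𝒳₂ → 𝒳₂)
      (fun p : 𝒳₁ × 𝒳₃ => h₂ (g₁₂ p.1) (g₃₂ p.2))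
  have ci3 : CI2 μ (fun ω => g₂₂ (X₂ ω)) (fun ω => h₂ (g₁₂ (X₁ ω)) (g₃₂ (X₃ ω))) Q :=
    CI2_comp μ (ci3_pair₂ μ hindep) g₂₂
      (fun p : 𝒳₁ × 𝒳₃ => h₂ (g₁₂ p.1) (g₃₂ p.2))
  -- injective repackagings
  have he1 : Function.Injective
      (fun p : 𝒳₁ × 𝒮₁ × 𝒬 => ((p.1, f₁ (g₁₁ p.1) p.2.1), p.2.2)) := by
    rintro ⟨x, s, q⟩ ⟨x', s', q'⟩ hpq
    simp only [Prod.mk.injEq] at hpq ⊢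
    obtain ⟨⟨hx, hy⟩, hq⟩ := hpq
    subst hx
    exact ⟨rfl, hf₁.2 (g₁₁ x) hy, hq⟩
  have he2 : Function.Injective
      (fun p : 𝒳₂ × 𝒮₂ × 𝒬 => ((p.1, f₂ (g₂₂ p.1) p.2.1), p.2.2)) := by
    rintro ⟨x, s, q⟩ ⟨x', s', q'⟩ hpq
    simp only [Prod.mk.injEq] at hpq ⊢
    obtain ⟨⟨hx, hy⟩, hq⟩ := hpq
    subst hx
    exact ⟨rfl, hf₂.2 (g₂₂ x) hy, hq⟩
  -- entropy identities
  have E1 : entH μ (fun ω =>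
        ((X₁ ω, f₁ (g₁₁ (X₁ ω)) (h₁ (g₂₁ (X₂ ω)) (g₃₁ (X₃ ω)))), Q ω))
      = entH μ (fun ω => (X₁ ω, h₁ (g₂₁ (X₂ ω)) (g₃₁ (X₃ ω)), Q ω)) :=
    entH_comp_injective μ
      (fun ω => (X₁ ω, h₁ (g₂₁ (X₂ ω)) (g₃₁ (X₃ ω)), Q ω)) he1
  have E2 : entH μ (fun ω =>
        ((X₂ ω, f₂ (g₂₂ (X₂ ω)) (h₂ (g₁₂ (X₁ ω)) (g₃₂ (X₃ ω)))), Q ω))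
      = entH μ (fun ω => (X₂ ω, h₂ (g₁₂ (X₁ ω)) (g₃₂ (X₃ ω)), Q ω)) :=
    entH_comp_injective μ
      (fun ω => (X₂ ω, h₂ (g₁₂ (X₁ ω)) (g₃₂ (X₃ ω)), Q ω)) he2
  have C1 : entH μ (fun ω => (X₁ ω, h₁ (g₂₁ (X₂ ω)) (g₃₁ (X₃ ω)), Q ω))
      = entH μ (fun ω => (X₁ ω, Q ω))
        + entH μ (fun ω => (h₁ (g₂₁ (X₂ ω)) (g₃₁ (X₃ ω)), Q ω)) - entH μ Q :=
    entH_CI μ X₁ _ Q ci1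
  have C2 : entH μ (fun ω => (X₂ ω, h₂ (g₁₂ (X₁ ω)) (g₃₂ (X₃ ω)), Q ω))
      = entH μ (fun ω => (X₂ ω, Q ω))
        + entH μ (fun ω => (h₂ (g₁₂ (X₁ ω)) (g₃₂ (X₃ ω)), Q ω)) - entH μ Q :=
    entH_CI μ X₂ _ Q ci2
  have C3 : entH μ (fun ω => (g₂₂ (X₂ ω), h₂ (g₁₂ (X₁ ω)) (g₃₂ (X₃ ω)), Q ω))
      = entH μ (fun ω => (g₂₂ (X₂ ω), Q ω))
        + entH μ (fun ω => (h₂ (g₁₂ (X₁ ω)) (g₃₂ (X₃ ω)), Q ω)) - entH μ Q :=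
    entH_CI μ (fun ω => g₂₂ (X₂ ω)) _ Q ci3
  have I5 : entH μ (fun ω =>
        (f₂ (g₂₂ (X₂ ω)) (h₂ (g₁₂ (X₁ ω)) (g₃₂ (X₃ ω))), Q ω))
      ≤ entH μ (fun ω => (g₂₂ (X₂ ω), h₂ (g₁₂ (X₁ ω)) (g₃₂ (X₃ ω)), Q ω)) :=
    entH_comp_le μ
      (fun ω => (g₂₂ (X₂ ω), h₂ (g₁₂ (X₁ ω)) (g₃₂ (X₃ ω)), Q ω))
      (fun p : 𝒳₂₂ × 𝒮₂ × 𝒬 => (f₂ p.1 p.2.1, p.2.2))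
  have I7 : entH μ (fun ω =>
        (f₁ (g₁₁ (X₁ ω)) (h₁ (g₂₁ (X₂ ω)) (g₃₁ (X₃ ω))), Q ω))
      ≤ entH μ (fun ω =>
        (f₁ (g₁₁ (X₁ ω)) (h₁ (g₂₁ (X₂ ω)) (g₃₁ (X₃ ω))), (g₃₁ (X₃ ω), Q ω))) :=
    entH_comp_le μ
      (fun ω => (f₁ (g₁₁ (X₁ ω)) (h₁ (g₂₁ (X₂ ω)) (g₃₁ (X₃ ω))), (g₃₁ (X₃ ω), Q ω)))
      (fun p : 𝒴₁ × 𝒳₃₁ × 𝒬 => (p.1, p.2.2))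
  simp only [condMI, condH] at hinv₁ hinv₂ hstrong ⊢
  linarith [E1, E2, C1, C2, C3, I5, I7, hinv₁, hinv₂, hstrong]
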